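/- Let X^{(1)},…,X^{(n)} be real payoff tensors of format d_1×···×d_n, set m = d_1 + ⋯ + d_n, and consider the Konstanz matrix K_X(x) with entries in the polynomial ring ℝ[x_1,…,x_n]. Then every m×m minor of K_X(x) (the determinant of the submatrix on any m of the ∏_i d_i columns), viewed as a polynomial in x_1,…,x_n, has total degree at most d_1 + d_2 + ⋯ + d_n − n + 1. -/

import Mathlib

open Finset

namespace KonstanzAux

set_option linter.unusedSectionVars false

lemma updateRow_updateRow' {m n α : Type*} [DecidableEq m] (M : Matrix m n α)
    (i : m) (u v : n → α) :
    (M.updateRow i u).updateRow i v = M.updateRow i v := by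
  ext r c
  by_cases h : r = i <;> simp [Matrix.updateRow_apply, h]

variable {ι : Type*} {κ : ι → Type*} {α : Type*} [CommRing α]
variable [DecidableEq ι] [Fintype ι] [∀ i, DecidableEq (κ i)] [∀ i, Fintype (κ i)]

/-- Matrix equal to `Q₀` except in the rows `⟨i, z i⟩`, which are given by `w i`. -/
def NN (Q₀ : Matrix ((i : ι) × κ i) ((i : ι) × κ i) α) (z : ∀ i, κ i)
    (w : ∀ _ : ι, ((i : ι) × κ i) → α) : Matrix ((i : ι) × κ i) ((i : ι) × κ i) α :=
  Matrix.of fun r c => if r.2 = z r.1 then w r.1 c else Q₀ r c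

variable (Q₀ : Matrix ((i : ι) × κ i) ((i : ι) × κ i) α) (z : ∀ i, κ i)

lemma NN_update (w : ∀ _ : ι, ((i : ι) × κ i) → α) (a : ι) (u : ((i : ι) × κ i) → α) :
    NN Q₀ z (Function.update w a u) = (NN Q₀ z w).updateRow ⟨a, z a⟩ u := by
  ext ⟨i, k⟩ c
  rw [Matrix.updateRow_apply]
  rcases eq_or_ne i a with rfl | hia
  · rcases eq_or_ne k (z i) with rfl | hk
    · rw [if_pos rfl]
      simp [NN]
    · rw [if_neg (by simp [Sigma.ext_iff, hk])]
      simp [NN, hk]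
  · rw [if_neg (by simp [Sigma.ext_iff, hia])]
    simp [NN, Function.update_of_ne hia]

lemma det_updateRow_rowsum (Q : Matrix ((i : ι) × κ i) ((i : ι) × κ i) α) (a : ι)
    (t : Finset (κ a)) (ht : z a ∉ t) :
    (Q.updateRow ⟨a, z a⟩ (Q ⟨a, z a⟩ + ∑ k ∈ t, Q ⟨a, k⟩)).det = Q.det := by
  revert ht
  induction t using Finset.induction_on with
  | empty => intro _; simp [Matrix.updateRow_eq_self]
  | @insert b t hb ih =>
    intro ht
    have hzb : b ≠ z a := by rintro rfl; exact ht (mem_insert_self _ _)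
    have hzt : z a ∉ t := fun h => ht (mem_insert_of_mem h)
    have hne : (⟨a, z a⟩ : (i : ι) × κ i) ≠ ⟨a, b⟩ := by
      simp [Sigma.ext_iff, Ne.symm hzb]
    set Q' := Q.updateRow ⟨a, z a⟩ (Q ⟨a, z a⟩ + ∑ k ∈ t, Q ⟨a, k⟩) with hQ'
    have e1 : Q' ⟨a, z a⟩ = Q ⟨a, z a⟩ + ∑ k ∈ t, Q ⟨a, k⟩ := Matrix.updateRow_self
    have e2 : Q' ⟨a, b⟩ = Q ⟨a, b⟩ := Matrix.updateRow_ne (Ne.symm hne)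
    have h1 : Q.updateRow ⟨a, z a⟩ (Q ⟨a, z a⟩ + ∑ k ∈ insert b t, Q ⟨a, k⟩)
        = Q'.updateRow ⟨a, z a⟩ (Q' ⟨a, z a⟩ + (1 : α) • Q' ⟨a, b⟩) := by
      rw [e1, e2, one_smul, hQ', updateRow_updateRow', Finset.sum_insert hb]
      congr 1
      abel
    rw [h1, Matrix.det_updateRow_add_smul_self Q' hne 1]
    exact ih hzt

lemma det_NN_sum (s : Finset ι) :
    (NN Q₀ z (fun i => if i ∈ s then (∑ k, Q₀ ⟨i, k⟩) else Q₀ ⟨i, z i⟩)).det = Q₀.det := by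
  induction s using Finset.induction_on with
  | empty =>
    have : NN Q₀ z (fun i => if i ∈ (∅ : Finset ι) then (∑ k, Q₀ ⟨i, k⟩) else Q₀ ⟨i, z i⟩)
        = Q₀ := by
      ext ⟨i, k⟩ c
      simp only [NN, Matrix.of_apply, Finset.notMem_empty, if_false]
      split_ifs with h
      · rw [h]
      · rfl
    rw [this]
  | @insert a s ha ih =>
    have hupd : (fun i => if i ∈ insert a s then (∑ k, Q₀ ⟨i, k⟩) else Q₀ ⟨i, z i⟩)
        = Function.update (fun i => if i ∈ s then (∑ k, Q₀ ⟨i, k⟩) else Q₀ ⟨i, z i⟩) a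
            (∑ k, Q₀ ⟨a, k⟩) := by
      funext i
      rcases eq_or_ne i a with rfl | hia
      · simp
      · simp [Function.update_of_ne hia, mem_insert, hia]
    rw [hupd, NN_update]
    set Q' := NN Q₀ z (fun i => if i ∈ s then (∑ k, Q₀ ⟨i, k⟩) else Q₀ ⟨i, z i⟩) with hQ'
    have hrow : (∑ k, Q₀ ⟨a, k⟩)
        = Q' ⟨a, z a⟩ + ∑ k ∈ Finset.univ.erase (z a), Q' ⟨a, k⟩ := by
      have hz : Q' ⟨a, z a⟩ = Q₀ ⟨a, z a⟩ := by
        funext c; simp [hQ', NN, ha]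
      have hk : (∑ k ∈ Finset.univ.erase (z a), Q' ⟨a, k⟩)
          = ∑ k ∈ Finset.univ.erase (z a), Q₀ ⟨a, k⟩ := by
        refine Finset.sum_congr rfl fun k hk => ?_
        funext c
        simp [hQ', NN, (Finset.mem_erase.mp hk).1]
      rw [hz, hk]
      exact (Finset.add_sum_erase _ _ (mem_univ (z a))).symm
    rw [hrow, det_updateRow_rowsum z Q' a (Finset.univ.erase (z a)) (notMem_erase _ _), ih]

lemma det_NN_expand (u v : ∀ _ : ι, ((i : ι) × κ i) → α) (s : Finset ι) :
    ∀ w : ∀ _ : ι, ((i : ι) × κ i) → α,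
    (NN Q₀ z (fun i => if i ∈ s then u i + v i else w i)).det
      = ∑ t ∈ s.powerset,
          (NN Q₀ z (fun i => if i ∈ s then (if i ∈ t then u i else v i) else w i)).det := by
  induction s using Finset.induction_on with
  | empty =>
    intro w
    simp only [Finset.notMem_empty, if_false, Finset.powerset_empty, Finset.sum_singleton]
  | @insert a s ha ih =>
    intro w
    have h1 : (fun i => if i ∈ insert a s then u i + v i else w i)
        = Function.update (fun i => if i ∈ s then u i + v i else w i) a (u a + v a) := by
      funext i
      rcases eq_or_ne i a with rfl | hia
      · simp
      · simp [Function.update_of_ne hia, mem_insert, hia]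
    have hA : Function.update (fun i => if i ∈ s then u i + v i else w i) a (u a)
        = fun i => if i ∈ s then u i + v i else (Function.update w a (u a)) i := by
      funext i
      rcases eq_or_ne i a with rfl | hia
      · simp [ha]
      · simp [Function.update_of_ne hia]
    have hB : Function.update (fun i => if i ∈ s then u i + v i else w i) a (v a)
        = fun i => if i ∈ s then u i + v i else (Function.update w a (v a)) i := by
      funext i
      rcases eq_or_ne i a with rfl | hia
      · simp [ha]
      · simp [Function.update_of_ne hia]
    rw [h1, NN_update, Matrix.det_updateRow_add, ← NN_update, ← NN_update, hA, hB,
      ih _, ih _, Finset.sum_powerset_insert ha, add_comm]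
    congr 1
    · -- v-terms match the `t` terms
      refine Finset.sum_congr rfl fun t htp => ?_
      have hts : t ⊆ s := Finset.mem_powerset.mp htp
      have hat : a ∉ t := fun h => ha (hts h)
      have hfun : (fun i => if i ∈ s then (if i ∈ t then u i else v i)
            else (Function.update w a (v a)) i)
          = fun i => if i ∈ insert a s then (if i ∈ t then u i else v i) else w i := by
        funext i
        rcases eq_or_ne i a with rfl | hia
        · simp [ha, hat]
        · simp [Function.update_of_ne hia, mem_insert, hia]
      rw [hfun]
    · -- u-terms match the `insert a t` terms
      refine Finset.sum_congr rfl fun t htp => ?_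
      have hts : t ⊆ s := Finset.mem_powerset.mp htp
      have hfun : (fun i => if i ∈ s then (if i ∈ t then u i else v i)
            else (Function.update w a (u a)) i)
          = fun i => if i ∈ insert a s then (if i ∈ insert a t then u i else v i) else w i := by
        funext i
        rcases eq_or_ne i a with rfl | hia
        · simp [ha]
        · simp [Function.update_of_ne hia, mem_insert, hia]
      rw [hfun]

lemma det_totalDegree_le {m : Type*} [DecidableEq m] [Fintype m] {σ S : Type*} [CommRing S]
    (Q : Matrix m m (MvPolynomial σ S)) (D : m → ℕ)
    (h : ∀ r c, (Q r c).totalDegree ≤ D r) : Q.det.totalDegree ≤ ∑ r, D r := by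
  rw [Matrix.det_apply']
  refine MvPolynomial.totalDegree_finsetSum_le fun p _ => ?_
  refine le_trans (MvPolynomial.totalDegree_mul _ _) ?_
  have hsign : (((Equiv.Perm.sign p : ℤˣ) : ℤ) : MvPolynomial σ S).totalDegree = 0 := by
    rcases Int.units_eq_one_or (Equiv.Perm.sign p) with h1 | h1 <;>
      rw [h1] <;> simp [MvPolynomial.totalDegree_neg]
  rw [hsign, zero_add]
  refine le_trans (MvPolynomial.totalDegree_finset_prod _ _) ?_
  calc ∑ c, (Q (p c) c).totalDegree ≤ ∑ c, D (p c) :=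
        Finset.sum_le_sum fun c _ => h _ _
    _ = ∑ r, D r := Equiv.sum_comp p D

end KonstanzAux

open Finset Matrix KonstanzAux in
/-- Every maximal minor of the Konstanz matrix `K_X(x)`,
viewed as a polynomial in `x₁, …, xₙ`, has total degree at most
`d₁ + ⋯ + dₙ − n + 1`. -/
theorem konstanz_minor_degree_bound
    (n : ℕ) (d : Fin n → ℕ) (hd : ∀ i, 1 ≤ d i)
    (X : Fin n → ((l : Fin n) → Fin (d l)) → ℝ)
    (K : Matrix ((i : Fin n) × Fin (d i)) ((l : Fin n) → Fin (d l))
      (MvPolynomial (Fin n) ℝ))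
    (hK : ∀ (i : Fin n) (k : Fin (d i)) (j : (l : Fin n) → Fin (d l)),
      K ⟨i, k⟩ j =
        if j i = k then MvPolynomial.X i - MvPolynomial.C (X i j) else 0)
    (cols : ((i : Fin n) × Fin (d i)) → ((l : Fin n) → Fin (d l)))
    (hcols : Function.Injective cols) :
    (Matrix.det (Matrix.of fun r r' => K r (cols r'))).totalDegree
      ≤ (∑ i, d i) - n + 1 := by
  classical
  set Q₀ : Matrix ((i : Fin n) × Fin (d i)) ((i : Fin n) × Fin (d i))
      (MvPolynomial (Fin n) ℝ) := Matrix.of fun r c => K r (cols c) with hQ₀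
  set z : ∀ i : Fin n, Fin (d i) := fun i => ⟨0, hd i⟩ with hz'
  set u : ∀ _ : Fin n, ((i : Fin n) × Fin (d i)) → MvPolynomial (Fin n) ℝ :=
    fun i _ => MvPolynomial.X i with hu
  set v : ∀ _ : Fin n, ((i : Fin n) × Fin (d i)) → MvPolynomial (Fin n) ℝ :=
    fun i c => - MvPolynomial.C (X i (cols c)) with hv
  -- the sum of the rows of block `i`
  have hsum : ∀ i : Fin n, (∑ k, Q₀ ⟨i, k⟩) = u i + v i := by
    intro i
    funext c
    rw [Finset.sum_apply]
    have h1 : ∀ k ∈ Finset.univ, Q₀ ⟨i, k⟩ c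
        = if (cols c) i = k then MvPolynomial.X i - MvPolynomial.C (X i (cols c)) else 0 :=
      fun k _ => hK i k (cols c)
    rw [Finset.sum_congr rfl h1, Finset.sum_ite_eq]
    simp [hu, hv, sub_eq_add_neg]
  -- determinant expansion
  have e0 := det_NN_sum Q₀ z Finset.univ
  have e1 := det_NN_expand Q₀ z u v Finset.univ (fun i => Q₀ ⟨i, z i⟩)
  have hfun : (fun i => if i ∈ (Finset.univ : Finset (Fin n)) then u i + v i else Q₀ ⟨i, z i⟩)
      = fun i => if i ∈ (Finset.univ : Finset (Fin n)) then (∑ k, Q₀ ⟨i, k⟩)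
          else Q₀ ⟨i, z i⟩ := by
    funext i
    simp [hsum i]
  rw [hfun] at e1
  have key : Q₀.det = ∑ t ∈ (Finset.univ : Finset (Fin n)).powerset,
      (NN Q₀ z (fun i => if i ∈ (Finset.univ : Finset (Fin n))
        then (if i ∈ t then u i else v i) else Q₀ ⟨i, z i⟩)).det := by
    rw [← e0, e1]
  rw [key]
  refine MvPolynomial.totalDegree_finsetSum_le fun t _ => ?_
  have hGfun : (fun i => if i ∈ (Finset.univ : Finset (Fin n))
      then (if i ∈ t then u i else v i) else Q₀ ⟨i, z i⟩)
      = fun i => if i ∈ t then u i else v i := by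
    funext i; simp
  rw [hGfun]
  set G := NN Q₀ z (fun i => if i ∈ t then u i else v i) with hG
  by_cases hcard : 1 < t.card
  · -- two "linear" rows: determinant vanishes
    obtain ⟨i, hi, j, hj, hij⟩ := Finset.one_lt_card.mp hcard
    have hGi : G ⟨i, z i⟩ = u i := by funext c; simp [hG, NN, hi]
    have hGj : G ⟨j, z j⟩ = u j := by funext c; simp [hG, NN, hj]
    have hne : (⟨i, z i⟩ : (i : Fin n) × Fin (d i)) ≠ ⟨j, z j⟩ := by
      intro h; exact hij (congrArg Sigma.fst h)
    have hz0 : (MvPolynomial.X j : MvPolynomial (Fin n) ℝ) * G.det = 0 := by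
      calc (MvPolynomial.X j : MvPolynomial (Fin n) ℝ) * G.det
          = (MvPolynomial.X j) * (G.updateRow ⟨i, z i⟩ (G ⟨i, z i⟩)).det := by
            rw [Matrix.updateRow_eq_self]
        _ = (G.updateRow ⟨i, z i⟩ ((MvPolynomial.X j : MvPolynomial (Fin n) ℝ)
              • G ⟨i, z i⟩)).det := (Matrix.det_updateRow_smul _ _ _ _).symm
        _ = (G.updateRow ⟨i, z i⟩ ((MvPolynomial.X i : MvPolynomial (Fin n) ℝ)
              • G ⟨j, z j⟩)).det := by
            have hsw : (MvPolynomial.X j : MvPolynomial (Fin n) ℝ) • G ⟨i, z i⟩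
                = (MvPolynomial.X i : MvPolynomial (Fin n) ℝ) • G ⟨j, z j⟩ := by
              rw [hGi, hGj, hu]
              funext c
              simp [mul_comm]
            rw [hsw]
        _ = (MvPolynomial.X i) * (G.updateRow ⟨i, z i⟩ (G ⟨j, z j⟩)).det :=
            Matrix.det_updateRow_smul _ _ _ _
        _ = (MvPolynomial.X i) * 0 := by
            rw [Matrix.det_zero_of_row_eq hne
              (by rw [Matrix.updateRow_self, Matrix.updateRow_ne (Ne.symm hne)])]
        _ = 0 := mul_zero _
    have hdet0 : G.det = 0 := by
      rcases mul_eq_zero.mp hz0 with h | h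
      · exact absurd h (MvPolynomial.X_ne_zero j)
      · exact h
    simp [hdet0]
  · -- at most one "linear" row: degree count
    push_neg at hcard
    set D : ((i : Fin n) × Fin (d i)) → ℕ :=
      fun r => (if r.2 = z r.1 then 0 else 1) + (if r.2 = z r.1 ∧ r.1 ∈ t then 1 else 0)
      with hD
    have hDbound : ∀ r c, (G r c).totalDegree ≤ D r := by
      rintro ⟨i, k⟩ c
      by_cases hk : k = z i
      · by_cases hit : i ∈ t
        · simp [hG, NN, hk, hit, hD, hu, MvPolynomial.totalDegree_X]
        · simp [hG, NN, hk, hit, hD, hv, MvPolynomial.totalDegree_neg]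
      · have h2 : G ⟨i, k⟩ c
            = if (cols c) i = k then MvPolynomial.X i - MvPolynomial.C (X i (cols c)) else 0 := by
          rw [hG]
          simp only [NN, Matrix.of_apply, hk, if_false]
          exact hK i k (cols c)
        have hD1 : D ⟨i, k⟩ = 1 := by simp [hD, hk]
        rw [h2, hD1]
        split_ifs with h3
        · rw [sub_eq_add_neg]
          refine le_trans (MvPolynomial.totalDegree_add _ _) ?_
          simp [MvPolynomial.totalDegree_X, MvPolynomial.totalDegree_neg]
        · simp
    refine le_trans (det_totalDegree_le G D hDbound) ?_
    have hsplit : (∑ r : (i : Fin n) × Fin (d i), D r)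
        = (∑ r : (i : Fin n) × Fin (d i), if r.2 = z r.1 then 0 else 1)
          + (∑ r : (i : Fin n) × Fin (d i), if r.2 = z r.1 ∧ r.1 ∈ t then 1 else 0) := by
      rw [hD, ← Finset.sum_add_distrib]
    have hA : (∑ r : (i : Fin n) × Fin (d i), if r.2 = z r.1 then 0 else 1)
        = (∑ i, d i) - n := by
      rw [← Finset.univ_sigma_univ, Finset.sum_sigma]
      have hinner : ∀ i : Fin n, (∑ k : Fin (d i), if k = z i then (0 : ℕ) else 1)
          = d i - 1 := by
        intro i
        rw [show (∑ k : Fin (d i), if k = z i then (0 : ℕ) else 1)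
            = ∑ k ∈ Finset.univ.erase (z i), (if k = z i then (0 : ℕ) else 1) from
          (Finset.sum_erase Finset.univ
            (f := fun k : Fin (d i) => if k = z i then (0 : ℕ) else 1) (if_pos rfl)).symm]
        rw [Finset.sum_congr rfl fun k hk => if_neg (Finset.mem_erase.mp hk).1]
        rw [Finset.sum_const, smul_eq_mul, mul_one,
          Finset.card_erase_of_mem (Finset.mem_univ _), Finset.card_univ, Fintype.card_fin]
      rw [Finset.sum_congr rfl fun i _ => hinner i]
      have hsub : (∑ i : Fin n, (d i - 1)) = (∑ i : Fin n, d i) - ∑ i : Fin n, 1 :=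
        Finset.sum_tsub_distrib Finset.univ (fun i _ => hd i)
      rw [hsub]
      simp [Finset.card_univ]
    have hB : (∑ r : (i : Fin n) × Fin (d i), if r.2 = z r.1 ∧ r.1 ∈ t then 1 else 0)
        = t.card := by
      rw [← Finset.univ_sigma_univ, Finset.sum_sigma]
      have hinner : ∀ i : Fin n, (∑ k : Fin (d i), if k = z i ∧ i ∈ t then (1 : ℕ) else 0)
          = if i ∈ t then 1 else 0 := by
        intro i
        by_cases hit : i ∈ t
        · simp only [hit, and_true]
          rw [Finset.sum_ite_eq' Finset.univ (z i) (fun _ => (1 : ℕ))]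
          simp
        · simp [hit]
      rw [Finset.sum_congr rfl fun i _ => hinner i, Finset.sum_ite_mem]
      simp
    rw [hsplit, hA, hB]
    exact Nat.add_le_add_left hcard _
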